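/- Let (Ω, P) be a probability space, let E = ℝ^d, and let X, Y, W : Ω → E be square-integrable measurable random vectors such that Y and W are independent and E[‖X − Y‖²] ≤ Δ for some Δ ≥ 0. Then there exists a probability measure π on (E × E) × (E × E) whose first marginal equals the joint law of (X, W), whose second marginal equals the product measure (law of X) ⊗ (law of W), and which satisfies (∫ ‖p − q‖² dπ((p, q)))^{1/2} ≤ 2 · √Δ, where the norm on E × E is the Euclidean product norm. -/

import Mathlib

open MeasureTheory ProbabilityTheory
open scoped ENNReal


lemma aux_sq_moment_triangle {α : Type*} {mα : MeasurableSpace α} {μ : Measure α}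
    {E : Type*} [NormedAddCommGroup E]
    {f g : α → E} (hf : MemLp f 2 μ) (hg : MemLp g 2 μ)
    {a b : ℝ} (ha : 0 ≤ a) (hb : 0 ≤ b)
    (hfa : ∫ x, ‖f x‖ ^ 2 ∂μ ≤ a ^ 2) (hgb : ∫ x, ‖g x‖ ^ 2 ∂μ ≤ b ^ 2) :
    ∫ x, ‖f x + g x‖ ^ 2 ∂μ ≤ (a + b) ^ 2 := by
  have hfi : Integrable (fun x => ‖f x‖ ^ 2) μ := hf.norm.integrable_sq
  have hgi : Integrable (fun x => ‖g x‖ ^ 2) μ := hg.norm.integrable_sq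
  have hfnn : 0 ≤ ∫ x, ‖f x‖ ^ 2 ∂μ := integral_nonneg fun x => by positivity
  have hgnn : 0 ≤ ∫ x, ‖g x‖ ^ 2 ∂μ := integral_nonneg fun x => by positivity
  have hmul : Integrable (fun x => ‖f x‖ * ‖g x‖) μ := by
    have h1 : MemLp (fun x => ‖f x‖ * ‖g x‖) 1 μ := by
      have h := hg.norm.smul hf.norm (p := 2) (q := 2) (r := (1 : ℝ≥0∞))
      simpa [Pi.smul_apply, smul_eq_mul, Pi.mul_def] using h
    exact memLp_one_iff_integrable.mp h1
  have hCS : ∫ x, ‖f x‖ * ‖g x‖ ∂μ ≤ a * b := by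
    have h2 : MemLp (fun x => ‖f x‖) (ENNReal.ofReal 2) μ := by
      convert hf.norm using 2; norm_num
    have h3 : MemLp (fun x => ‖g x‖) (ENNReal.ofReal 2) μ := by
      convert hg.norm using 2; norm_num
    have hconj : Real.HolderConjugate 2 2 := by rw [Real.holderConjugate_iff]; norm_num
    have h := integral_mul_le_Lp_mul_Lq_of_nonneg hconj
      (Filter.Eventually.of_forall fun x => norm_nonneg (f x))
      (Filter.Eventually.of_forall fun x => norm_nonneg (g x)) h2 h3
    have h2' : (∫ x, ‖f x‖ ^ (2 : ℝ) ∂μ) ^ (1 / (2:ℝ)) ≤ a := by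
      simp_rw [Real.rpow_two]
      rw [← Real.sqrt_eq_rpow]
      calc Real.sqrt (∫ x, ‖f x‖ ^ 2 ∂μ) ≤ Real.sqrt (a ^ 2) := Real.sqrt_le_sqrt hfa
        _ = a := Real.sqrt_sq ha
    have h3' : (∫ x, ‖g x‖ ^ (2 : ℝ) ∂μ) ^ (1 / (2:ℝ)) ≤ b := by
      simp_rw [Real.rpow_two]
      rw [← Real.sqrt_eq_rpow]
      calc Real.sqrt (∫ x, ‖g x‖ ^ 2 ∂μ) ≤ Real.sqrt (b ^ 2) := Real.sqrt_le_sqrt hgb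
        _ = b := Real.sqrt_sq hb
    calc ∫ x, ‖f x‖ * ‖g x‖ ∂μ
        ≤ (∫ x, ‖f x‖ ^ (2:ℝ) ∂μ) ^ (1/(2:ℝ)) * (∫ x, ‖g x‖ ^ (2:ℝ) ∂μ) ^ (1/(2:ℝ)) := h
      _ ≤ a * b := by
          apply mul_le_mul h2' h3' _ ha
          positivity
  have hpt : ∀ x, ‖f x + g x‖ ^ 2 ≤ ‖f x‖ ^ 2 + 2 * (‖f x‖ * ‖g x‖) + ‖g x‖ ^ 2 := by
    intro x
    have h1 : ‖f x + g x‖ ≤ ‖f x‖ + ‖g x‖ := norm_add_le _ _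
    have h2 : ‖f x + g x‖ ^ 2 ≤ (‖f x‖ + ‖g x‖) ^ 2 := by
      apply pow_le_pow_left₀ (norm_nonneg _) h1
    nlinarith [h2]
  calc ∫ x, ‖f x + g x‖ ^ 2 ∂μ
      ≤ ∫ x, (‖f x‖ ^ 2 + 2 * (‖f x‖ * ‖g x‖) + ‖g x‖ ^ 2) ∂μ := by
        apply integral_mono_of_nonneg (Filter.Eventually.of_forall fun x => by positivity)
          ((hfi.add (hmul.const_mul 2)).add hgi) (Filter.Eventually.of_forall hpt)
    _ = ∫ x, ‖f x‖ ^ 2 ∂μ + 2 * ∫ x, ‖f x‖ * ‖g x‖ ∂μ + ∫ x, ‖g x‖ ^ 2 ∂μ := by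
        have hI2 : Integrable (fun x => 2 * (‖f x‖ * ‖g x‖)) μ := hmul.const_mul 2
        have hI12 : Integrable (fun x => ‖f x‖ ^ 2 + 2 * (‖f x‖ * ‖g x‖)) μ := hfi.add hI2
        rw [integral_add hI12 hgi, integral_add hfi hI2, integral_const_mul]
    _ ≤ a ^ 2 + 2 * (a * b) + b ^ 2 := by
        gcongr
    _ = (a + b) ^ 2 := by ring

theorem coupling_bound_product_law
    {Ω : Type*} [MeasureSpace Ω] [IsProbabilityMeasure (ℙ : Measure Ω)]
    (d : ℕ) (X Y W : Ω → EuclideanSpace ℝ (Fin d))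
    (hX : Measurable X) (hY : Measurable Y) (hW : Measurable W)
    (hX2 : MemLp X 2 ℙ) (hY2 : MemLp Y 2 ℙ) (hW2 : MemLp W 2 ℙ)
    (hindep : IndepFun Y W ℙ)
    (Δ : ℝ) (hΔ : 0 ≤ Δ)
    (hXY : ∫ ω, ‖X ω - Y ω‖ ^ 2 ∂ℙ ≤ Δ) :
    ∃ π : Measure ((EuclideanSpace ℝ (Fin d) × EuclideanSpace ℝ (Fin d)) ×
                   (EuclideanSpace ℝ (Fin d) × EuclideanSpace ℝ (Fin d))),
      IsProbabilityMeasure π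
      ∧ π.map Prod.fst = Measure.map (fun ω => (X ω, W ω)) ℙ
      ∧ π.map Prod.snd = (Measure.map X ℙ).prod (Measure.map W ℙ)
      ∧ Real.sqrt (∫ pq, (‖pq.1.1 - pq.2.1‖ ^ 2 + ‖pq.1.2 - pq.2.2‖ ^ 2) ∂π)
          ≤ 2 * Real.sqrt Δ := by
  classical
  -- conditional distribution of X given Y
  set κ : Kernel (EuclideanSpace ℝ (Fin d)) (EuclideanSpace ℝ (Fin d)) :=
    condDistrib X Y ℙ with hκdef
  set η : Kernel Ω (EuclideanSpace ℝ (Fin d)) := κ.comap Y hY with hηdef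
  set P' : Measure (Ω × EuclideanSpace ℝ (Fin d)) := (ℙ : Measure Ω) ⊗ₘ η with hP'def
  haveI : IsMarkovKernel κ := by rw [hκdef]; infer_instance
  haveI : IsMarkovKernel η := by rw [hηdef]; infer_instance
  haveI : IsProbabilityMeasure P' := by rw [hP'def]; infer_instance
  -- Fact A : disintegration
  have hA : (Measure.map Y ℙ) ⊗ₘ κ = Measure.map (fun ω => (Y ω, X ω)) ℙ := by
    rw [hκdef, condDistrib]
    conv_lhs => rw [← Measure.fst_map_prodMk (X := Y) (Y := X) hX]
    exact (Measure.map (fun ω => (Y ω, X ω)) ℙ).disintegrate _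
  -- Fact B : law of (Y ∘ fst, snd) under P' is the law of (Y, X)
  have hYfst : Measurable fun p : Ω × EuclideanSpace ℝ (Fin d) => (Y p.1, p.2) :=
    (hY.comp measurable_fst).prodMk measurable_snd
  have hB : P'.map (fun p : Ω × EuclideanSpace ℝ (Fin d) => (Y p.1, p.2))
      = Measure.map (fun ω => (Y ω, X ω)) ℙ := by
    rw [← hA]
    ext s hs
    rw [Measure.map_apply hYfst hs, hP'def, Measure.compProd_apply (hYfst hs),
      Measure.compProd_apply hs, lintegral_map (Kernel.measurable_kernel_prodMk_left hs) hY]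
    refine lintegral_congr fun ω => ?_
    rw [hηdef, Kernel.comap_apply]
    rfl
  -- Fact C : first marginal of P' is ℙ
  have hC : P'.map Prod.fst = ℙ := by
    have h := Measure.fst_compProd (ℙ : Measure Ω) η
    rw [hP'def]
    simpa [Measure.fst] using h
  -- ∫⁻ of κ (Y ω) s is the law of X
  have hκX : ∀ s : Set (EuclideanSpace ℝ (Fin d)), MeasurableSet s →
      ∫⁻ ω, κ (Y ω) s ∂ℙ = Measure.map X ℙ s := by
    intro s hs
    have h1 := congrArg (fun μ : Measure _ => μ (Set.univ ×ˢ s)) hA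
    rw [Measure.compProd_apply_prod MeasurableSet.univ hs,
      Measure.map_apply ((hY.prodMk hX)) (MeasurableSet.univ.prod hs),
      Measure.restrict_univ,
      lintegral_map (Kernel.measurable_coe κ hs) hY] at h1
    rw [h1, Measure.map_apply hX hs]
    congr 1
    ext ω
    simp
  -- Fact D : law of (snd, W ∘ fst) under P' is the product law
  have hsndW : Measurable fun p : Ω × EuclideanSpace ℝ (Fin d) => (p.2, W p.1) :=
    measurable_snd.prodMk (hW.comp measurable_fst)
  have hD : P'.map (fun p : Ω × EuclideanSpace ℝ (Fin d) => (p.2, W p.1))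
      = (Measure.map X ℙ).prod (Measure.map W ℙ) := by
    refine (Measure.prod_eq fun s t hs ht => ?_).symm
    rw [Measure.map_apply hsndW (hs.prod ht)]
    have hpre : (fun p : Ω × EuclideanSpace ℝ (Fin d) => (p.2, W p.1)) ⁻¹' (s ×ˢ t)
        = (W ⁻¹' t) ×ˢ s := by
      ext p; simp [Set.mem_prod, and_comm]
    rw [hpre, hP'def, Measure.compProd_apply_prod (hW ht) hs]
    have hη : ∀ ω, η ω s = κ (Y ω) s := fun ω => by rw [hηdef, Kernel.comap_apply]
    set f : Ω → ℝ≥0∞ := fun ω => κ (Y ω) s with hfdef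
    set g : Ω → ℝ≥0∞ := fun ω => (W ⁻¹' t).indicator 1 ω with hgdef
    have hfm : Measurable f := (Kernel.measurable_coe κ hs).comp hY
    have hgm : Measurable g := (measurable_one.indicator (hW ht))
    have hind : IndepFun f g ℙ :=
      hindep.comp (Kernel.measurable_coe κ hs) (measurable_one.indicator ht)
    have hstep : ∫⁻ ω in W ⁻¹' t, η ω s ∂ℙ = ∫⁻ ω, (f * g) ω ∂ℙ := by
      rw [← lintegral_indicator (hW ht)]
      refine lintegral_congr fun ω => ?_
      show (W ⁻¹' t).indicator (fun ω => (η ω) s) ω = f ω * g ω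
      by_cases hω : W ω ∈ t
      · have hω' : ω ∈ W ⁻¹' t := hω
        simp [Set.indicator_apply, hω, hω', hη, f, g]
      · have hω' : ω ∉ W ⁻¹' t := hω
        simp [Set.indicator_apply, hω, hω', hη, f, g]
    rw [hstep, lintegral_mul_eq_lintegral_mul_lintegral_of_indepFun hfm hgm hind]
    rw [hκX s hs]
    congr 1
    rw [hgdef, lintegral_indicator_one (hW ht), Measure.map_apply hW ht]
  -- measure preserving maps
  have mpfst : MeasurePreserving (Prod.fst : Ω × EuclideanSpace ℝ (Fin d) → Ω) P' ℙ :=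
    ⟨measurable_fst, hC⟩
  have mpYX : MeasurePreserving (fun ω => (Y ω, X ω)) ℙ
      (Measure.map (fun ω => (Y ω, X ω)) ℙ) := ⟨hY.prodMk hX, rfl⟩
  have mpB : MeasurePreserving (fun p : Ω × EuclideanSpace ℝ (Fin d) => (Y p.1, p.2)) P'
      (Measure.map (fun ω => (Y ω, X ω)) ℙ) := ⟨hYfst, hB⟩
  -- MemLp facts on P'
  have hX2' : MemLp (fun p : Ω × EuclideanSpace ℝ (Fin d) => X p.1) 2 P' :=
    hX2.comp_measurePreserving mpfst
  have hY2' : MemLp (fun p : Ω × EuclideanSpace ℝ (Fin d) => Y p.1) 2 P' :=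
    hY2.comp_measurePreserving mpfst
  have hsubcont : Continuous (fun q : EuclideanSpace ℝ (Fin d) × EuclideanSpace ℝ (Fin d) =>
      q.1 - q.2) := continuous_fst.sub continuous_snd
  have hsubmem : MemLp (fun q : EuclideanSpace ℝ (Fin d) × EuclideanSpace ℝ (Fin d) =>
      q.1 - q.2) 2 (Measure.map (fun ω => (Y ω, X ω)) ℙ) := by
    constructor
    · exact hsubcont.aestronglyMeasurable
    · have := eLpNorm_comp_measurePreserving (p := 2)
        (g := fun q : EuclideanSpace ℝ (Fin d) × EuclideanSpace ℝ (Fin d) => q.1 - q.2)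
        hsubcont.aestronglyMeasurable mpYX
      rw [← this]
      exact (hY2.sub hX2).2
  have hYZ2 : MemLp (fun p : Ω × EuclideanSpace ℝ (Fin d) => Y p.1 - p.2) 2 P' :=
    hsubmem.comp_measurePreserving mpB
  -- second moment bounds on P'
  have hmom1 : ∫ p, ‖X p.1 - Y p.1‖ ^ 2 ∂P' ≤ Δ := by
    have : ∫ p, ‖X p.1 - Y p.1‖ ^ 2 ∂P' = ∫ ω, ‖X ω - Y ω‖ ^ 2 ∂ℙ := by
      rw [← hC, integral_map measurable_fst.aemeasurable]
      exact (((hX.sub hY).norm.pow_const 2).aestronglyMeasurable)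
    rw [this]; exact hXY
  have hmom2 : ∫ p, ‖Y p.1 - p.2‖ ^ 2 ∂P' ≤ Δ := by
    have h1 : ∫ p, ‖Y p.1 - p.2‖ ^ 2 ∂P'
        = ∫ q, ‖q.1 - q.2‖ ^ 2 ∂(Measure.map (fun ω => (Y ω, X ω)) ℙ) := by
      rw [← hB, integral_map hYfst.aemeasurable]
      exact ((hsubcont.norm.pow 2).aestronglyMeasurable)
    have h2 : ∫ q, ‖q.1 - q.2‖ ^ 2 ∂(Measure.map (fun ω => (Y ω, X ω)) ℙ)
        = ∫ ω, ‖Y ω - X ω‖ ^ 2 ∂ℙ := by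
      rw [integral_map (hY.prodMk hX).aemeasurable]
      exact ((hsubcont.norm.pow 2).aestronglyMeasurable)
    rw [h1, h2]
    simp_rw [norm_sub_rev]
    exact hXY
  -- the key second-moment bound
  have hkey : ∫ p, ‖X p.1 - p.2‖ ^ 2 ∂P' ≤ (2 * Real.sqrt Δ) ^ 2 := by
    have sqrtΔ : (0:ℝ) ≤ Real.sqrt Δ := Real.sqrt_nonneg Δ
    have h := aux_sq_moment_triangle (μ := P')
      (f := fun p : Ω × EuclideanSpace ℝ (Fin d) => X p.1 - Y p.1)
      (g := fun p : Ω × EuclideanSpace ℝ (Fin d) => Y p.1 - p.2)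
      (hX2'.sub hY2') hYZ2 sqrtΔ sqrtΔ
      (by rw [Real.sq_sqrt hΔ]; exact hmom1) (by rw [Real.sq_sqrt hΔ]; exact hmom2)
    have heq : ∀ p : Ω × EuclideanSpace ℝ (Fin d),
        X p.1 - Y p.1 + (Y p.1 - p.2) = X p.1 - p.2 := fun p => sub_add_sub_cancel _ _ _
    calc ∫ p, ‖X p.1 - p.2‖ ^ 2 ∂P'
        = ∫ p, ‖X p.1 - Y p.1 + (Y p.1 - p.2)‖ ^ 2 ∂P' := by
          refine integral_congr_ae (Filter.Eventually.of_forall fun p => ?_)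
          simp only [heq p]
      _ ≤ (Real.sqrt Δ + Real.sqrt Δ) ^ 2 := h
      _ = (2 * Real.sqrt Δ) ^ 2 := by ring
  -- the coupling
  set F : Ω × EuclideanSpace ℝ (Fin d) →
      (EuclideanSpace ℝ (Fin d) × EuclideanSpace ℝ (Fin d)) ×
      (EuclideanSpace ℝ (Fin d) × EuclideanSpace ℝ (Fin d)) :=
    fun p => ((X p.1, W p.1), (p.2, W p.1)) with hFdef
  have hFm : Measurable F :=
    ((hX.comp measurable_fst).prodMk (hW.comp measurable_fst)).prodMk
      (measurable_snd.prodMk (hW.comp measurable_fst))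
  refine ⟨P'.map F, Measure.isProbabilityMeasure_map hFm.aemeasurable, ?_, ?_, ?_⟩
  · rw [Measure.map_map measurable_fst hFm]
    have : (Prod.fst ∘ F) = (fun ω => (X ω, W ω)) ∘ Prod.fst := rfl
    rw [this, ← Measure.map_map (hX.prodMk hW) measurable_fst, hC]
  · rw [Measure.map_map measurable_snd hFm]
    exact hD
  · haveI : OpensMeasurableSpace ((EuclideanSpace ℝ (Fin d) × EuclideanSpace ℝ (Fin d)) ×
        (EuclideanSpace ℝ (Fin d) × EuclideanSpace ℝ (Fin d))) := Prod.opensMeasurableSpace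
    have hcost : ∫ pq, (‖pq.1.1 - pq.2.1‖ ^ 2 + ‖pq.1.2 - pq.2.2‖ ^ 2) ∂(P'.map F)
        = ∫ p, ‖X p.1 - p.2‖ ^ 2 ∂P' := by
      rw [integral_map hFm.aemeasurable]
      · refine integral_congr_ae (Filter.Eventually.of_forall fun p => ?_)
        simp [hFdef]
      · have hc : Continuous fun pq : (EuclideanSpace ℝ (Fin d) × EuclideanSpace ℝ (Fin d)) ×
            (EuclideanSpace ℝ (Fin d) × EuclideanSpace ℝ (Fin d)) =>
            ‖pq.1.1 - pq.2.1‖ ^ 2 + ‖pq.1.2 - pq.2.2‖ ^ 2 := by fun_prop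
        exact hc.aestronglyMeasurable
    rw [hcost]
    calc Real.sqrt (∫ p, ‖X p.1 - p.2‖ ^ 2 ∂P')
        ≤ Real.sqrt ((2 * Real.sqrt Δ) ^ 2) := Real.sqrt_le_sqrt hkey
      _ = 2 * Real.sqrt Δ := Real.sqrt_sq (by positivity)
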